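/- Let p ∈ ℝ[x₁,…,xₙ] be a d-homogeneous polynomial with nonnegative coefficients. Then p is log-concave on the positive orthant — i.e. for all x, y ∈ ℝⁿ with all coordinates strictly positive and all t ∈ [0,1], p(t·x + (1−t)·y) ≥ p(x)^t·p(y)^{1−t} — if and only if for every x ∈ ℝⁿ with all coordinates strictly positive, the Hessian matrix (∇²p)(x) = ((∂ᵢ∂ⱼp)(x))ᵢⱼ has at most one positive eigenvalue. -/

import Mathlib

open MvPolynomial Matrix Finset
open scoped Classical

namespace Stmt18

variable {n : ℕ}


noncomputable def lineP (p : MvPolynomial (Fin n) ℝ) (z v : Fin n → ℝ) : Polynomial ℝ :=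
  MvPolynomial.aeval (fun i => Polynomial.C (z i) + Polynomial.C (v i) * Polynomial.X) p

lemma lineP_eval (p : MvPolynomial (Fin n) ℝ) (z v : Fin n → ℝ) (s : ℝ) :
    (lineP p z v).eval s = eval (fun i => z i + s * v i) p := by
  induction p using MvPolynomial.induction_on with
  | C a => simp [lineP]
  | add p q hp hq => simp [lineP, map_add] at hp hq ⊢; rw [hp, hq]
  | mul_X p j hp => simp [lineP, _root_.map_mul] at hp ⊢; rw [hp]; ring

lemma lineP_add (p q : MvPolynomial (Fin n) ℝ) (z v : Fin n → ℝ) :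
    lineP (p + q) z v = lineP p z v + lineP q z v := by simp [lineP]

lemma lineP_mul (p q : MvPolynomial (Fin n) ℝ) (z v : Fin n → ℝ) :
    lineP (p * q) z v = lineP p z v * lineP q z v := by simp [lineP]

lemma lineP_derivative (p : MvPolynomial (Fin n) ℝ) (z v : Fin n → ℝ) :
    (lineP p z v).derivative = ∑ i, Polynomial.C (v i) * lineP (pderiv i p) z v := by
  induction p using MvPolynomial.induction_on with
  | C a => simp [lineP]
  | add p q hp hq =>
      simp only [lineP_add, map_add, hp, hq, ← Finset.sum_add_distrib, mul_add]
  | mul_X p j hp =>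
      have hm : lineP (p * X j) z v
          = lineP p z v * (Polynomial.C (z j) + Polynomial.C (v j) * Polynomial.X) := by
        simp [lineP]
      rw [hm, Polynomial.derivative_mul, hp]
      have hstep : ∀ i : Fin n, pderiv i (p * X j)
          = pderiv i p * X j + (if j = i then p else 0) := by
        intro i
        rw [pderiv_mul]
        classical
        simp [pderiv_X, Pi.single_apply]
      have h2 : ∀ i : Fin n, Polynomial.C (v i) * lineP (pderiv i (p * X j)) z v
          = Polynomial.C (v i) * lineP (pderiv i p) z v *
              (Polynomial.C (z j) + Polynomial.C (v j) * Polynomial.X)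
            + (if j = i then Polynomial.C (v j) * lineP p z v else 0) := by
        intro i
        rw [hstep i, lineP_add, lineP_mul]
        have hX : lineP (X j) z v = Polynomial.C (z j) + Polynomial.C (v j) * Polynomial.X := by
          simp [lineP]
        rw [hX]
        split
        · rename_i h; subst h; simp [lineP]; ring
        · simp [lineP]; ring
      rw [Finset.sum_congr rfl fun i _ => h2 i, Finset.sum_add_distrib, ← Finset.sum_mul,
        Finset.sum_ite_eq]
      simp
      ring



lemma eval_scale {p : MvPolynomial (Fin n) ℝ} {d : ℕ} (hp : p.IsHomogeneous d)
    (c : ℝ) (z : Fin n → ℝ) :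
    eval (fun i => c * z i) p = c ^ d * eval z p := by
  rw [eval_eq, eval_eq, Finset.mul_sum]
  refine Finset.sum_congr rfl fun m hm => ?_
  have hdeg : m.degree = d := by
    by_contra h
    exact (mem_support_iff.1 hm) (hp.coeff_eq_zero h)
  have : ∏ i ∈ m.support, (c * z i) ^ m i
      = c ^ d * ∏ i ∈ m.support, z i ^ m i := by
    rw [← hdeg]
    simp only [mul_pow, Finset.prod_mul_distrib, Finsupp.degree, AddMonoidHom.coe_mk, ZeroHom.coe_mk, Finset.prod_pow_eq_pow_sum]
    rfl
  rw [this]; ring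

lemma eval_nonneg {p : MvPolynomial (Fin n) ℝ} (hnn : ∀ m, 0 ≤ coeff m p)
    {z : Fin n → ℝ} (hz : ∀ i, 0 < z i) : 0 ≤ eval z p := by
  rw [eval_eq]
  refine Finset.sum_nonneg fun m _ => mul_nonneg (hnn m) (Finset.prod_nonneg fun i _ =>
    pow_nonneg (hz i).le _)

lemma eval_pos {p : MvPolynomial (Fin n) ℝ} (hnn : ∀ m, 0 ≤ coeff m p)
    (hp : p ≠ 0) {z : Fin n → ℝ} (hz : ∀ i, 0 < z i) : 0 < eval z p := by
  rw [eval_eq]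
  obtain ⟨m, hm⟩ : p.support.Nonempty := Finset.nonempty_iff_ne_empty.2 (mt support_eq_empty.1 hp)
  refine Finset.sum_pos' (fun m _ => mul_nonneg (hnn m) (Finset.prod_nonneg fun i _ =>
    pow_nonneg (hz i).le _)) ⟨m, hm, ?_⟩
  have h1 : 0 < coeff m p := lt_of_le_of_ne (hnn m) (Ne.symm (mem_support_iff.1 hm))
  exact mul_pos h1 (Finset.prod_pos fun i _ => pow_pos (hz i) _)

lemma eq_zero_of_eval_eq_zero {p : MvPolynomial (Fin n) ℝ} (hnn : ∀ m, 0 ≤ coeff m p)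
    {z : Fin n → ℝ} (hz : ∀ i, 0 < z i) (h : eval z p = 0) : p = 0 := by
  by_contra hp
  exact absurd h (ne_of_gt (eval_pos hnn hp hz))

lemma isHomogeneous_pderiv {p : MvPolynomial (Fin n) ℝ} {d : ℕ} (hp : p.IsHomogeneous d)
    (i : Fin n) : (pderiv i p).IsHomogeneous (d - 1) := by
  rw [← support_sum_monomial_coeff p, map_sum]
  apply IsHomogeneous.sum
  intro m hm
  rw [pderiv_monomial]
  rcases Nat.eq_zero_or_pos (m i) with h0 | h1
  · rw [h0]; simp; exact isHomogeneous_zero _ _ _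
  · apply isHomogeneous_monomial
    have hdeg : m.degree = d := by
      by_contra h
      exact (mem_support_iff.1 hm) (hp.coeff_eq_zero h)
    have hle : Finsupp.single i 1 ≤ m := by
      rw [Finsupp.single_le_iff]; exact h1
    have hds : (Finsupp.single i 1).degree = 1 := by
      rw [Finsupp.degree_single]
    have : (m - Finsupp.single i 1).degree + (Finsupp.single i 1).degree = m.degree := by
      simp only [Finsupp.degree_eq_weight_one]
      rw [← map_add, tsub_add_cancel_of_le hle]
    rw [hds] at this
    omega

lemma eq_C_of_isHomogeneous_zero {p : MvPolynomial (Fin n) ℝ} (hp : p.IsHomogeneous 0) :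
    p = C (coeff 0 p) := by
  ext m
  rcases eq_or_ne m 0 with rfl | hm
  · simp
  · rw [hp.coeff_eq_zero (by simpa [Finsupp.degree_eq_zero_iff] using hm)]
    simp [coeff_C, Ne.symm hm]

lemma lineP_self {p : MvPolynomial (Fin n) ℝ} {d : ℕ} (hp : p.IsHomogeneous d) (z : Fin n → ℝ) :
    lineP p z z = (1 + Polynomial.X) ^ d * Polynomial.C (eval z p) := by
  apply Polynomial.funext
  intro s
  rw [lineP_eval]
  have : (fun i => z i + s * z i) = fun i => (1 + s) * z i := by funext i; ring
  rw [this, eval_scale hp]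
  simp [mul_comm]


lemma pderiv_pderiv_comm (p : MvPolynomial (Fin n) ℝ) (i j : Fin n) :
    pderiv i (pderiv j p) = pderiv j (pderiv i p) := by
  induction p using MvPolynomial.induction_on' with
  | monomial m a =>
    rcases eq_or_ne i j with rfl | hij
    · rfl
    · simp only [pderiv_monomial]
      have h1 : ((m - Finsupp.single j 1) : Fin n →₀ ℕ) i = m i := by
        rw [Finsupp.tsub_apply, Finsupp.single_eq_of_ne hij, Nat.sub_zero]
      have h2 : ((m - Finsupp.single i 1) : Fin n →₀ ℕ) j = m j := by
        rw [Finsupp.tsub_apply, Finsupp.single_eq_of_ne (Ne.symm hij), Nat.sub_zero]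
      rw [h1, h2, tsub_right_comm, mul_right_comm]
  | add p q hp hq => simp [map_add, hp, hq]

lemma euler {p : MvPolynomial (Fin n) ℝ} {d : ℕ} (hp : p.IsHomogeneous d) (z : Fin n → ℝ) :
    ∑ i, z i * eval z (pderiv i p) = (d : ℝ) * eval z p := by
  have h := congrArg (fun q => Polynomial.eval 0 (Polynomial.derivative q)) (lineP_self hp z)
  rw [lineP_derivative] at h
  have hL : Polynomial.eval 0 (∑ i, Polynomial.C (z i) * lineP (pderiv i p) z z)
      = ∑ i, z i * eval z (pderiv i p) := by
    rw [Polynomial.eval_finset_sum]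
    refine Finset.sum_congr rfl fun i _ => ?_
    rw [Polynomial.eval_mul, Polynomial.eval_C, lineP_eval]
    have hz : (fun j => z j + 0 * z j) = z := by funext j; ring
    rw [hz]
  have hR : Polynomial.eval 0 (Polynomial.derivative
      ((1 + Polynomial.X) ^ d * Polynomial.C (eval z p))) = (d : ℝ) * eval z p := by
    rw [Polynomial.derivative_mul, Polynomial.derivative_C, mul_zero, add_zero,
      Polynomial.derivative_pow]
    simp
  rw [hL, hR] at h
  exact h

lemma second_pderiv_eq_zero {p : MvPolynomial (Fin n) ℝ} {d : ℕ} (hp : p.IsHomogeneous d)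
    (hd : d ≤ 1) (i j : Fin n) : pderiv i (pderiv j p) = 0 := by
  have h0 : (pderiv j p).IsHomogeneous 0 := by
    have := isHomogeneous_pderiv hp j
    rwa [Nat.sub_eq_zero_of_le hd] at this
  rw [eq_C_of_isHomogeneous_zero h0, pderiv_C]

lemma euler2 {p : MvPolynomial (Fin n) ℝ} {d : ℕ} (hp : p.IsHomogeneous d) (hd : 1 ≤ d)
    (z : Fin n → ℝ) (j : Fin n) :
    ∑ i, z i * eval z (pderiv i (pderiv j p)) = ((d : ℝ) - 1) * eval z (pderiv j p) := by
  obtain ⟨e, rfl⟩ : ∃ e, d = e + 1 := ⟨d - 1, by omega⟩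
  have h := euler (isHomogeneous_pderiv hp j) z
  rw [Nat.add_sub_cancel] at h
  rw [h]
  push_cast
  ring
/-- The key pointwise differential condition. -/
def StarCond (p : MvPolynomial (Fin n) ℝ) : Prop :=
  ∀ z : Fin n → ℝ, (∀ i, 0 < z i) → ∀ v : Fin n → ℝ,
    eval z p * (∑ i, ∑ j, v i * v j * eval z (pderiv i (pderiv j p)))
      ≤ (∑ i, v i * eval z (pderiv i p)) ^ 2

lemma lineP_deriv_eval (p : MvPolynomial (Fin n) ℝ) (z v : Fin n → ℝ) (s : ℝ) :
    (lineP p z v).derivative.eval s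
      = ∑ i, v i * eval (fun j => z j + s * v j) (pderiv i p) := by
  rw [lineP_derivative, Polynomial.eval_finset_sum]
  exact Finset.sum_congr rfl fun i _ => by rw [Polynomial.eval_mul, Polynomial.eval_C, lineP_eval]

lemma lineP_deriv2_eval (p : MvPolynomial (Fin n) ℝ) (z v : Fin n → ℝ) (s : ℝ) :
    (lineP p z v).derivative.derivative.eval s
      = ∑ i, ∑ j, v i * v j * eval (fun k => z k + s * v k) (pderiv i (pderiv j p)) := by
  rw [lineP_derivative, Polynomial.derivative_sum, Polynomial.eval_finset_sum]
  refine Finset.sum_congr rfl fun i _ => ?_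
  rw [Polynomial.derivative_C_mul, Polynomial.eval_mul, Polynomial.eval_C, lineP_derivative,
    Polynomial.eval_finset_sum, Finset.mul_sum]
  refine Finset.sum_congr rfl fun j _ => ?_
  rw [Polynomial.eval_mul, Polynomial.eval_C, lineP_eval, pderiv_pderiv_comm]
  ring

lemma sq_rpow_half (x : ℝ) (hx : 0 ≤ x) : (x ^ (1/2 : ℝ)) ^ 2 = x := by
  rw [← Real.rpow_natCast (x ^ (1/2 : ℝ)) 2, ← Real.rpow_mul hx]
  norm_num

lemma starCond_of_logconcave {p : MvPolynomial (Fin n) ℝ} (hnn : ∀ m, 0 ≤ coeff m p)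
    (hlc : ∀ x y : Fin n → ℝ, (∀ i, 0 < x i) → (∀ i, 0 < y i) → ∀ t : ℝ, 0 ≤ t → t ≤ 1 →
        (eval x p) ^ t * (eval y p) ^ (1 - t) ≤
          eval (fun i => t * x i + (1 - t) * y i) p) :
    StarCond p := by
  intro z hz v
  obtain ⟨ε, hε, hεz⟩ : ∃ ε : ℝ, 0 < ε ∧ ∀ i, ε * (|v i| + 1) ≤ z i := by
    rcases isEmpty_or_nonempty (Fin n) with hn | hn
    · exact ⟨1, one_pos, fun i => isEmptyElim i⟩
    · refine ⟨Finset.univ.inf' Finset.univ_nonempty (fun i => z i / (|v i| + 1)), ?_, fun i => ?_⟩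
      · exact (Finset.lt_inf'_iff _).2 fun i _ => div_pos (hz i) (by positivity)
      · have hle : Finset.univ.inf' Finset.univ_nonempty (fun i => z i / (|v i| + 1))
            ≤ z i / (|v i| + 1) := Finset.inf'_le _ (Finset.mem_univ i)
        calc Finset.univ.inf' Finset.univ_nonempty (fun i => z i / (|v i| + 1)) * (|v i| + 1)
            ≤ (z i / (|v i| + 1)) * (|v i| + 1) :=
              mul_le_mul_of_nonneg_right hle (by positivity)
          _ = z i := div_mul_cancel₀ _ (by positivity)
  set a := eval z p with ha
  have ha0 : 0 ≤ a := eval_nonneg hnn hz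
  set Q1 := lineP p z v with hQ1
  set Q2 := lineP p z (fun i => -v i) with hQ2
  set ψ := Q1 * Q2 - Polynomial.C (a ^ 2) with hψ
  have hpt : ∀ w : Fin n → ℝ, (fun j => z j + (0:ℝ) * w j) = z := fun w => funext fun j => by ring
  -- ψ ≤ 0 on [-ε, ε]
  have hψle : ∀ s : ℝ, |s| ≤ ε → ψ.eval s ≤ 0 := by
    intro s hs
    have hxpos : ∀ i, 0 < z i + s * v i := by
      intro i
      have h1 : |s * v i| < z i := by
        rw [abs_mul]
        calc |s| * |v i| ≤ ε * |v i| := mul_le_mul_of_nonneg_right hs (abs_nonneg _)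
          _ < ε * (|v i| + 1) := by nlinarith
          _ ≤ z i := hεz i
      nlinarith [neg_abs_le (s * v i)]
    have hypos : ∀ i, 0 < z i + s * -v i := by
      intro i
      have h1 : |s * -v i| < z i := by
        rw [abs_mul, abs_neg]
        calc |s| * |v i| ≤ ε * |v i| := mul_le_mul_of_nonneg_right hs (abs_nonneg _)
          _ < ε * (|v i| + 1) := by nlinarith
          _ ≤ z i := hεz i
      nlinarith [neg_abs_le (s * -v i)]
    have happ := hlc (fun i => z i + s * v i) (fun i => z i + s * -v i) hxpos hypos
      (1/2) (by norm_num) (by norm_num)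
    beta_reduce at happ
    rw [show (fun i => 1 / 2 * (z i + s * v i) + (1 - 1 / 2) * (z i + s * -v i)) = z
      from funext fun i => by ring, show (1 - 1/2 : ℝ) = 1/2 by norm_num, ← ha] at happ
    set A1 := eval (fun i => z i + s * v i) p with hA1
    set A2 := eval (fun i => z i + s * -v i) p with hA2
    have hA10 : 0 ≤ A1 := eval_nonneg hnn hxpos
    have hA20 : 0 ≤ A2 := eval_nonneg hnn hypos
    have hsqle : A1 * A2 ≤ a ^ 2 := by
      have h2 : (A1 ^ (1/2 : ℝ) * A2 ^ (1/2 : ℝ)) ^ 2 ≤ a ^ 2 :=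
        pow_le_pow_left₀ (mul_nonneg (Real.rpow_nonneg hA10 _) (Real.rpow_nonneg hA20 _)) happ 2
      rw [mul_pow, sq_rpow_half _ hA10, sq_rpow_half _ hA20] at h2
      exact h2
    have heval : ψ.eval s = A1 * A2 - a ^ 2 := by
      rw [hψ, Polynomial.eval_sub, Polynomial.eval_mul, Polynomial.eval_C, hQ1, hQ2,
        lineP_eval, lineP_eval]
    rw [heval]
    linarith
  -- coefficients 0 and 1 of ψ vanish
  have hQ10 : Q1.eval 0 = a := by rw [hQ1, lineP_eval, hpt]
  have hQ20 : Q2.eval 0 = a := by rw [hQ2, lineP_eval, hpt]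
  set b := ∑ i, v i * eval z (pderiv i p) with hb
  have hQ1d0 : Q1.derivative.eval 0 = b := by
    rw [hQ1, lineP_deriv_eval, hpt]
  have hQ2d0 : Q2.derivative.eval 0 = -b := by
    rw [hQ2, lineP_deriv_eval, hpt, hb, ← Finset.sum_neg_distrib]
    exact Finset.sum_congr rfl fun i _ => by ring
  set S := ∑ i, ∑ j, v i * v j * eval z (pderiv i (pderiv j p)) with hS
  have hQ1dd0 : Q1.derivative.derivative.eval 0 = S := by
    rw [hQ1, lineP_deriv2_eval, hpt]
  have hQ2dd0 : Q2.derivative.derivative.eval 0 = S := by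
    rw [hQ2, lineP_deriv2_eval, hpt, hS]
    exact Finset.sum_congr rfl fun i _ => Finset.sum_congr rfl fun j _ => by ring
  have hψ0 : ψ.coeff 0 = 0 := by
    rw [Polynomial.coeff_zero_eq_eval_zero, hψ, Polynomial.eval_sub, Polynomial.eval_mul,
      Polynomial.eval_C, hQ10, hQ20]
    ring
  have hψd : ψ.derivative = Q1.derivative * Q2 + Q1 * Q2.derivative := by
    rw [hψ, Polynomial.derivative_sub, Polynomial.derivative_C, sub_zero,
      Polynomial.derivative_mul]
  have hψ1 : ψ.coeff 1 = 0 := by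
    have h := Polynomial.coeff_derivative ψ 0
    rw [hψd] at h
    have h2 : (Q1.derivative * Q2 + Q1 * Q2.derivative).coeff 0 = 0 := by
      rw [Polynomial.coeff_zero_eq_eval_zero, Polynomial.eval_add, Polynomial.eval_mul,
        Polynomial.eval_mul, hQ1d0, hQ2d0, hQ10, hQ20]
      ring
    rw [h2] at h
    have := h.symm
    simpa using this
  -- ψ = X^2 * ρ
  set ρ := ψ.divX.divX with hρ
  have hψX2 : ψ = Polynomial.X ^ 2 * ρ := by
    have h1 := Polynomial.X_mul_divX_add ψ
    rw [hψ0, map_zero, add_zero] at h1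
    have h2 := Polynomial.X_mul_divX_add ψ.divX
    rw [Polynomial.coeff_divX, hψ1, map_zero, add_zero] at h2
    rw [← h1, ← h2, hρ]
    ring
  -- ρ(0) ≤ 0 by continuity
  have hρ0 : ρ.eval 0 ≤ 0 := by
    by_contra hpos
    push_neg at hpos
    have hc : ContinuousAt (fun s => ρ.eval s) 0 := (Polynomial.continuous ρ).continuousAt
    have hev : (fun s => ρ.eval s) ⁻¹' Set.Ioi 0 ∈ nhds (0 : ℝ) := hc (Ioi_mem_nhds hpos)
    obtain ⟨η, hη, hball⟩ := Metric.mem_nhds_iff.1 hev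
    set s0 := min (η / 2) ε with hs0
    have hs0pos : 0 < s0 := lt_min (by linarith) hε
    have hs0mem : s0 ∈ Metric.ball (0:ℝ) η := by
      rw [Metric.mem_ball, Real.dist_eq, sub_zero, abs_of_pos hs0pos]
      calc s0 ≤ η / 2 := min_le_left _ _
        _ < η := by linarith
    have hρs0 : 0 < ρ.eval s0 := hball hs0mem
    have hψs0 : 0 < ψ.eval s0 := by
      rw [hψX2, Polynomial.eval_mul, Polynomial.eval_pow, Polynomial.eval_X]
      positivity
    have := hψle s0 (by rw [abs_of_pos hs0pos]; exact min_le_right _ _)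
    linarith
  -- second derivative identities
  have hsec : ψ.derivative.derivative.eval 0 = 2 * ρ.eval 0 := by
    rw [hψX2]
    simp [Polynomial.derivative_mul, Polynomial.derivative_X_pow]
    ring_nf
    simp
  have hsec2 : ψ.derivative.derivative.eval 0 = 2 * (a * S - b ^ 2) := by
    rw [hψd, Polynomial.derivative_add, Polynomial.derivative_mul, Polynomial.derivative_mul]
    simp only [Polynomial.eval_add, Polynomial.eval_mul]
    rw [hQ1dd0, hQ2dd0, hQ1d0, hQ2d0, hQ10, hQ20]
    ring
  rw [hsec2] at hsec
  linarith

lemma logconcave_of_starCond {p : MvPolynomial (Fin n) ℝ} (hnn : ∀ m, 0 ≤ coeff m p)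
    (hstar : StarCond p) :
    ∀ x y : Fin n → ℝ, (∀ i, 0 < x i) → (∀ i, 0 < y i) → ∀ t : ℝ, 0 ≤ t → t ≤ 1 →
        (eval x p) ^ t * (eval y p) ^ (1 - t) ≤
          eval (fun i => t * x i + (1 - t) * y i) p := by
  intro x y hx hy t ht ht1
  rcases eq_or_ne p 0 with rfl | hp
  · simp only [map_zero]
    rcases eq_or_ne t 0 with rfl | htne
    · simp
    · rw [Real.zero_rpow htne, zero_mul]
  · -- p ≠ 0, so p > 0 on the positive orthant
    set w : Fin n → ℝ := fun i => x i - y i with hw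
    set q := lineP p y w with hq
    have hptpos : ∀ s : ℝ, 0 ≤ s → s ≤ 1 → ∀ i, 0 < y i + s * w i := by
      intro s hs0 hs1 i
      have heq : y i + s * w i = (1 - s) * y i + s * x i := by rw [hw]; ring
      rw [heq]
      rcases lt_or_ge s 1 with hlt | hge
      · have h1 : 0 < (1 - s) * y i := mul_pos (by linarith) (hy i)
        have h2 : 0 ≤ s * x i := mul_nonneg hs0 (hx i).le
        linarith
      · have hs : s = 1 := le_antisymm hs1 hge
        rw [hs]; simpa using hx i
    have hqpos : ∀ s : ℝ, 0 ≤ s → s ≤ 1 → 0 < q.eval s := by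
      intro s hs0 hs1
      rw [hq, lineP_eval]
      exact eval_pos hnn hp (hptpos s hs0 hs1)
    set g : ℝ → ℝ := fun s => Real.log (q.eval s) with hg
    have hIoo : interior (Set.Icc (0:ℝ) 1) = Set.Ioo 0 1 := interior_Icc
    have hgderiv : ∀ s ∈ Set.Ioo (0:ℝ) 1,
        HasDerivAt g (q.derivative.eval s / q.eval s) s := by
      intro s hs
      exact (q.hasDerivAt s).log (ne_of_gt (hqpos s hs.1.le hs.2.le))
    have hderiv_eq : ∀ s ∈ Set.Ioo (0:ℝ) 1, deriv g s = q.derivative.eval s / q.eval s :=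
      fun s hs => (hgderiv s hs).deriv
    have hcont : ContinuousOn g (Set.Icc 0 1) := by
      apply ContinuousOn.log
      · exact q.continuous.continuousOn
      · intro s hs
        exact ne_of_gt (hqpos s hs.1 hs.2)
    have hdiff : DifferentiableOn ℝ g (interior (Set.Icc (0:ℝ) 1)) := by
      rw [hIoo]
      exact fun s hs => ((hgderiv s hs).differentiableAt).differentiableWithinAt
    have hdiff2 : DifferentiableOn ℝ (deriv g) (interior (Set.Icc (0:ℝ) 1)) := by
      rw [hIoo]
      have : DifferentiableOn ℝ (fun s => q.derivative.eval s / q.eval s) (Set.Ioo 0 1) := by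
        apply DifferentiableOn.div
        · exact (Polynomial.differentiable _).differentiableOn
        · exact (Polynomial.differentiable _).differentiableOn
        · exact fun s hs => ne_of_gt (hqpos s hs.1.le hs.2.le)
      exact this.congr hderiv_eq
    have hdd : ∀ s ∈ Set.Ioo (0:ℝ) 1,
        deriv (deriv g) s = (q.derivative.derivative.eval s * q.eval s
          - q.derivative.eval s * q.derivative.eval s) / (q.eval s) ^ 2 := by
      intro s hs
      have hop : Set.Ioo (0:ℝ) 1 ∈ nhds s := (isOpen_Ioo).mem_nhds hs
      have hee : deriv g =ᶠ[nhds s] fun u => q.derivative.eval u / q.eval u :=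
        Filter.eventuallyEq_of_mem hop hderiv_eq
      rw [hee.deriv_eq]
      exact (((q.derivative).hasDerivAt s).div (q.hasDerivAt s)
        (ne_of_gt (hqpos s hs.1.le hs.2.le))).deriv
    have hdd_nonpos : ∀ s ∈ interior (Set.Icc (0:ℝ) 1), deriv^[2] g s ≤ 0 := by
      rw [hIoo]
      intro s hs
      have h2 : deriv^[2] g s = deriv (deriv g) s := by
        simp [Function.iterate_succ, Function.comp]
      rw [h2, hdd s hs]
      refine div_nonpos_iff.2 (Or.inr ⟨?_, sq_nonneg _⟩)
      have hst := hstar (fun j => y j + s * w j) (hptpos s hs.1.le hs.2.le) w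
      rw [hq, lineP_deriv2_eval, lineP_deriv_eval, lineP_eval]
      nlinarith [hst]
    have hconc : ConcaveOn ℝ (Set.Icc (0:ℝ) 1) g :=
      concaveOn_of_deriv2_nonpos (convex_Icc 0 1) hcont hdiff hdiff2 hdd_nonpos
    have key := hconc.2 (Set.mem_Icc.2 ⟨zero_le_one, le_refl 1⟩)
      (Set.mem_Icc.2 ⟨le_refl 0, zero_le_one⟩) ht (by linarith : (0:ℝ) ≤ 1 - t) (by ring)
    simp only [smul_eq_mul, mul_one, mul_zero, add_zero] at key
    have hq1 : q.eval 1 = eval x p := by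
      rw [hq, lineP_eval, show (fun i => y i + (1:ℝ) * w i) = x from
        funext fun j => by simp only [hw]; ring]
    have hq0 : q.eval 0 = eval y p := by
      rw [hq, lineP_eval, show (fun i => y i + (0:ℝ) * w i) = y from
        funext fun j => by simp only [hw]; ring]
    have hpx : 0 < eval x p := eval_pos hnn hp hx
    have hpy : 0 < eval y p := eval_pos hnn hp hy
    have hg1 : g 1 = Real.log (eval x p) := by simp only [hg]; rw [hq1]
    have hg0 : g 0 = Real.log (eval y p) := by simp only [hg]; rw [hq0]
    have hgt : Real.exp (g t) = eval (fun i => t * x i + (1 - t) * y i) p := by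
      simp only [hg]
      rw [Real.exp_log (hqpos t ht ht1), hq, lineP_eval,
        show (fun i => y i + t * w i) = (fun i => t * x i + (1 - t) * y i) from
        funext fun j => by simp only [hw]; ring]
    calc (eval x p) ^ t * (eval y p) ^ (1 - t)
        = Real.exp (t * Real.log (eval x p) + (1 - t) * Real.log (eval y p)) := by
          rw [Real.exp_add, Real.rpow_def_of_pos hpx, Real.rpow_def_of_pos hpy,
            mul_comm (Real.log (eval x p)) t, mul_comm (Real.log (eval y p)) (1 - t)]
      _ ≤ Real.exp (g t) := by
          apply Real.exp_le_exp.2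
          rw [hg1, hg0] at key
          exact key
      _ = eval (fun i => t * x i + (1 - t) * y i) p := hgt



lemma inner_eq_dot (x y : EuclideanSpace ℝ (Fin n)) :
    (inner ℝ x y : ℝ) = (⇑x : Fin n → ℝ) ⬝ᵥ ⇑y := by
  simp [PiLp.inner_apply, dotProduct, mul_comm]

lemma e_dot_e {A : Matrix (Fin n) (Fin n) ℝ} (hA : A.IsHermitian) (k l : Fin n) :
    (⇑(hA.eigenvectorBasis k) : Fin n → ℝ) ⬝ᵥ ⇑(hA.eigenvectorBasis l)
      = if k = l then 1 else 0 := by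
  rw [← inner_eq_dot]
  exact orthonormal_iff_ite.1 hA.eigenvectorBasis.orthonormal k l

lemma qform {A : Matrix (Fin n) (Fin n) ℝ} (hA : A.IsHermitian) (u v : Fin n → ℝ) :
    u ⬝ᵥ (A *ᵥ v) = ∑ k, hA.eigenvalues k
      * ((⇑(hA.eigenvectorBasis k) : Fin n → ℝ) ⬝ᵥ u)
      * ((⇑(hA.eigenvectorBasis k) : Fin n → ℝ) ⬝ᵥ v) := by
  have hentry : ∀ i j : Fin n,
      (((hA.eigenvectorUnitary : Matrix (Fin n) (Fin n) ℝ)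
        * diagonal ((RCLike.ofReal : ℝ → ℝ) ∘ hA.eigenvalues)
        * star (hA.eigenvectorUnitary : Matrix (Fin n) (Fin n) ℝ) : Matrix (Fin n) (Fin n) ℝ)) i j
      = ∑ k, hA.eigenvalues k * (hA.eigenvectorBasis k) i * (hA.eigenvectorBasis k) j := by
    intro i j
    rw [Matrix.mul_apply]
    refine Finset.sum_congr rfl fun k _ => ?_
    rw [Matrix.mul_diagonal, Matrix.star_apply]
    simp only [Function.comp_apply, Matrix.IsHermitian.eigenvectorUnitary_apply, star_trivial,
      RCLike.ofReal_real_eq_id, id_eq]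
    ring
  calc u ⬝ᵥ (A *ᵥ v)
      = ∑ i, ∑ j, ∑ k, hA.eigenvalues k
          * ((hA.eigenvectorBasis k) i * u i) * ((hA.eigenvectorBasis k) j * v j) := by
        conv_lhs => rw [hA.spectral_theorem]
        simp only [Unitary.conjStarAlgAut_apply, dotProduct, Matrix.mulVec, hentry]
        refine Finset.sum_congr rfl fun i _ => ?_
        rw [Finset.mul_sum]
        refine Finset.sum_congr rfl fun j _ => ?_
        rw [Finset.sum_mul, Finset.mul_sum]
        refine Finset.sum_congr rfl fun k _ => ?_
        ring
    _ = ∑ k, ∑ i, ∑ j, hA.eigenvalues k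
          * ((hA.eigenvectorBasis k) i * u i) * ((hA.eigenvectorBasis k) j * v j) := by
        rw [show (∑ i : Fin n, ∑ j : Fin n, ∑ k : Fin n, hA.eigenvalues k
            * ((hA.eigenvectorBasis k) i * u i) * ((hA.eigenvectorBasis k) j * v j))
          = ∑ i : Fin n, ∑ k : Fin n, ∑ j : Fin n, hA.eigenvalues k
            * ((hA.eigenvectorBasis k) i * u i) * ((hA.eigenvectorBasis k) j * v j)
          from Finset.sum_congr rfl fun i _ => Finset.sum_comm]
        exact Finset.sum_comm
    _ = ∑ k, hA.eigenvalues k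
          * ((⇑(hA.eigenvectorBasis k) : Fin n → ℝ) ⬝ᵥ u)
          * ((⇑(hA.eigenvectorBasis k) : Fin n → ℝ) ⬝ᵥ v) := by
        refine Finset.sum_congr rfl fun k _ => ?_
        rw [dotProduct, dotProduct, mul_assoc, Finset.sum_mul_sum, Finset.mul_sum]
        refine Finset.sum_congr rfl fun i _ => ?_
        rw [Finset.mul_sum]
        refine Finset.sum_congr rfl fun j _ => ?_
        ring
lemma key_ineq {A0 a0 B0 b0 P N : ℝ} (hA0 : 0 ≤ A0) (hB0 : 0 ≤ B0) (ha0 : 0 ≤ a0)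
    (hb0 : 0 ≤ b0) (hP : P ^ 2 = A0 * B0) (hN : N ^ 2 ≤ a0 * b0) (hu : 0 < A0 - a0) :
    (A0 - a0) * (B0 - b0) ≤ (P + N) ^ 2 := by
  rcases le_or_gt (B0 - b0) 0 with hB | hB
  · nlinarith [sq_nonneg (P + N)]
  · set q := Real.sqrt (A0 * B0) with hqdef
    set r := Real.sqrt (a0 * b0) with hrdef
    have hq0 : 0 ≤ q := Real.sqrt_nonneg _
    have hr0 : 0 ≤ r := Real.sqrt_nonneg _
    have hq : q ^ 2 = A0 * B0 := Real.sq_sqrt (mul_nonneg hA0 hB0)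
    have hr : r ^ 2 = a0 * b0 := Real.sq_sqrt (mul_nonneg ha0 hb0)
    have hrq : r ≤ q := Real.sqrt_le_sqrt (by nlinarith)
    have hmr : |N| ≤ r := by
      rw [← Real.sqrt_sq_eq_abs]
      exact Real.sqrt_le_sqrt (by nlinarith)
    have hPq : |P| = q := by
      rw [← Real.sqrt_sq_eq_abs, hP]
    have h1 : q - |N| ≤ |P + N| := by
      have := abs_sub_abs_le_abs_sub P (-N)
      simp only [abs_neg, sub_neg_eq_add] at this
      linarith [hPq ▸ this]
    have h2qr : 2 * (q * r) ≤ A0 * b0 + a0 * B0 := by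
      have hqr : q * r = Real.sqrt ((A0 * B0) * (a0 * b0)) :=
        (Real.sqrt_mul (mul_nonneg hA0 hB0) _).symm
      have hle : (A0 * B0) * (a0 * b0) ≤ ((A0 * b0 + a0 * B0) / 2) ^ 2 := by
        nlinarith [sq_nonneg (A0 * b0 - a0 * B0)]
      have : q * r ≤ (A0 * b0 + a0 * B0) / 2 := by
        rw [hqr]
        calc Real.sqrt ((A0 * B0) * (a0 * b0)) ≤ Real.sqrt (((A0 * b0 + a0 * B0) / 2) ^ 2) :=
              Real.sqrt_le_sqrt hle
          _ = (A0 * b0 + a0 * B0) / 2 := by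
              rw [Real.sqrt_sq (by positivity)]
      linarith
    have step1 : (A0 - a0) * (B0 - b0) ≤ (q - r) ^ 2 := by nlinarith
    have step2 : (q - r) ^ 2 ≤ (q - |N|) ^ 2 := by
      apply pow_le_pow_left₀ (by linarith)
      linarith
    have step3 : (q - |N|) ^ 2 ≤ (P + N) ^ 2 := by
      calc (q - |N|) ^ 2 ≤ |P + N| ^ 2 := pow_le_pow_left₀ (by linarith) h1 2
        _ = (P + N) ^ 2 := sq_abs _
    linarith

lemma rcs {A : Matrix (Fin n) (Fin n) ℝ} (hA : A.IsHermitian)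
    (h1 : (Finset.univ.filter fun i => 0 < hA.eigenvalues i).card ≤ 1)
    (u v : Fin n → ℝ) (hu : 0 < u ⬝ᵥ (A *ᵥ u)) :
    (u ⬝ᵥ (A *ᵥ u)) * (v ⬝ᵥ (A *ᵥ v)) ≤ (u ⬝ᵥ (A *ᵥ v)) ^ 2 := by
  classical
  obtain ⟨μ, hμeq, hμcard, huu, hvv, huv⟩ : ∃ μ : Fin n → ℝ,
      (∃ c dd : Fin n → ℝ,
        u ⬝ᵥ (A *ᵥ u) = ∑ k, μ k * c k * c k ∧
        v ⬝ᵥ (A *ᵥ v) = ∑ k, μ k * dd k * dd k ∧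
        u ⬝ᵥ (A *ᵥ v) = ∑ k, μ k * c k * dd k) ∧
      (Finset.univ.filter fun i => 0 < μ i).card ≤ 1 ∧ True ∧ True ∧ True := by
    refine ⟨hA.eigenvalues, ⟨fun k => (⇑(hA.eigenvectorBasis k) : Fin n → ℝ) ⬝ᵥ u,
      fun k => (⇑(hA.eigenvectorBasis k) : Fin n → ℝ) ⬝ᵥ v,
      qform hA u u, qform hA v v, qform hA u v⟩, h1, trivial, trivial, trivial⟩
  obtain ⟨c, dd, huu, hvv, huv⟩ := hμeq
  clear h1
  rcases Nat.le_one_iff_eq_zero_or_eq_one.1 hμcard with h | h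
  · -- no positive eigenvalue
    exfalso
    have hall : ∀ k, μ k ≤ 0 := by
      intro k
      by_contra hk
      have hmem : k ∈ (Finset.univ.filter fun i => 0 < μ i) :=
        Finset.mem_filter.2 ⟨Finset.mem_univ _, lt_of_not_ge hk⟩
      have := Finset.card_pos.2 ⟨k, hmem⟩
      omega
    have : u ⬝ᵥ (A *ᵥ u) ≤ 0 := by
      rw [huu]
      exact Finset.sum_nonpos fun k _ => by nlinarith [sq_nonneg (c k), hall k]
    linarith
  · -- exactly one positive eigenvalue i0
    obtain ⟨i0, hi0⟩ := Finset.card_eq_one.1 h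
    have hμi0 : 0 < μ i0 := by
      have : i0 ∈ (Finset.univ.filter fun i => 0 < μ i) := by
        rw [hi0]; exact Finset.mem_singleton_self _
      exact (Finset.mem_filter.1 this).2
    have hneg : ∀ k, k ≠ i0 → μ k ≤ 0 := by
      intro k hk
      by_contra hkpos
      have : k ∈ (Finset.univ.filter fun i => 0 < μ i) :=
        Finset.mem_filter.2 ⟨Finset.mem_univ _, lt_of_not_ge hkpos⟩
      rw [hi0, Finset.mem_singleton] at this
      exact hk this
    set s : Finset (Fin n) := Finset.univ.erase i0 with hs
    have hsneg : ∀ k ∈ s, μ k ≤ 0 := fun k hk => hneg k (Finset.ne_of_mem_erase hk)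
    have hsplit : ∀ f : Fin n → ℝ, ∑ k, f k = f i0 + ∑ k ∈ s, f k := by
      intro f
      rw [hs, ← Finset.add_sum_erase _ f (Finset.mem_univ i0)]
    have huu2 : u ⬝ᵥ (A *ᵥ u) = μ i0 * c i0 * c i0 - (-∑ k ∈ s, μ k * c k * c k) := by
      rw [huu, hsplit]; ring
    have hvv2 : v ⬝ᵥ (A *ᵥ v) = μ i0 * dd i0 * dd i0 - (-∑ k ∈ s, μ k * dd k * dd k) := by
      rw [hvv, hsplit]; ring
    have huv2 : u ⬝ᵥ (A *ᵥ v) = μ i0 * c i0 * dd i0 + ∑ k ∈ s, μ k * c k * dd k := by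
      rw [huv, hsplit]
    have hN : (∑ k ∈ s, μ k * c k * dd k) ^ 2
        ≤ (-∑ k ∈ s, μ k * c k * c k) * (-∑ k ∈ s, μ k * dd k * dd k) := by
      have hcs := Finset.sum_mul_sq_le_sq_mul_sq s
        (fun k => Real.sqrt (-μ k) * c k) (fun k => Real.sqrt (-μ k) * dd k)
      have he : ∀ k ∈ s, Real.sqrt (-μ k) * c k * (Real.sqrt (-μ k) * dd k)
          = -(μ k * c k * dd k) := fun k hk => by
        have h := Real.mul_self_sqrt (by linarith [hsneg k hk] : (0:ℝ) ≤ -μ k)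
        linear_combination (c k * dd k) * h
      have he2 : ∀ k ∈ s, (Real.sqrt (-μ k) * c k) ^ 2 = -(μ k * c k * c k) := fun k hk => by
        have h := Real.mul_self_sqrt (by linarith [hsneg k hk] : (0:ℝ) ≤ -μ k)
        linear_combination (c k * c k) * h
      have he3 : ∀ k ∈ s, (Real.sqrt (-μ k) * dd k) ^ 2 = -(μ k * dd k * dd k) := fun k hk => by
        have h := Real.mul_self_sqrt (by linarith [hsneg k hk] : (0:ℝ) ≤ -μ k)
        linear_combination (dd k * dd k) * h
      rw [Finset.sum_congr rfl he, Finset.sum_congr rfl he2, Finset.sum_congr rfl he3,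
        Finset.sum_neg_distrib, Finset.sum_neg_distrib, Finset.sum_neg_distrib, neg_sq] at hcs
      exact hcs
    have ha0 : 0 ≤ -∑ k ∈ s, μ k * c k * c k := by
      rw [neg_nonneg]
      exact Finset.sum_nonpos fun k hk => by nlinarith [sq_nonneg (c k), hsneg k hk]
    have hb0 : 0 ≤ -∑ k ∈ s, μ k * dd k * dd k := by
      rw [neg_nonneg]
      exact Finset.sum_nonpos fun k hk => by nlinarith [sq_nonneg (dd k), hsneg k hk]
    have hA0 : 0 ≤ μ i0 * c i0 * c i0 := by nlinarith [sq_nonneg (c i0)]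
    have hB0 : 0 ≤ μ i0 * dd i0 * dd i0 := by nlinarith [sq_nonneg (dd i0)]
    have hP : (μ i0 * c i0 * dd i0) ^ 2 = (μ i0 * c i0 * c i0) * (μ i0 * dd i0 * dd i0) := by
      ring
    rw [huu2, hvv2, huv2]
    exact key_ineq hA0 hB0 ha0 hb0 hP hN (huu2 ▸ hu)

lemma atMostOne_of {A : Matrix (Fin n) (Fin n) ℝ} (hA : A.IsHermitian) (cvec : Fin n → ℝ)
    (hc : ∀ w : Fin n → ℝ, cvec ⬝ᵥ w = 0 → w ⬝ᵥ (A *ᵥ w) ≤ 0) :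
    (Finset.univ.filter fun i => 0 < hA.eigenvalues i).card ≤ 1 := by
  classical
  by_contra hcard
  obtain ⟨a, ha, b, hb, hab⟩ := Finset.one_lt_card.1 (lt_of_not_ge hcard)
  have hμa : 0 < hA.eigenvalues a := (Finset.mem_filter.1 ha).2
  have hμb : 0 < hA.eigenvalues b := (Finset.mem_filter.1 hb).2
  set ea : Fin n → ℝ := ⇑(hA.eigenvectorBasis a) with hea
  set eb : Fin n → ℝ := ⇑(hA.eigenvectorBasis b) with heb
  have hAea : A *ᵥ ea = hA.eigenvalues a • ea := hA.mulVec_eigenvectorBasis a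
  have hAeb : A *ᵥ eb = hA.eigenvalues b • eb := hA.mulVec_eigenvectorBasis b
  have heaa : ea ⬝ᵥ ea = 1 := by rw [hea, e_dot_e hA a a, if_pos rfl]
  have hebb : eb ⬝ᵥ eb = 1 := by rw [heb, e_dot_e hA b b, if_pos rfl]
  have heab : ea ⬝ᵥ eb = 0 := by rw [hea, heb, e_dot_e hA a b, if_neg hab]
  have heba : eb ⬝ᵥ ea = 0 := by rw [hea, heb, e_dot_e hA b a, if_neg (Ne.symm hab)]
  have hform : ∀ x y : ℝ, (x • ea + y • eb) ⬝ᵥ (A *ᵥ (x • ea + y • eb))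
      = hA.eigenvalues a * x ^ 2 + hA.eigenvalues b * y ^ 2 := by
    intro x y
    simp only [Matrix.mulVec_add, Matrix.mulVec_smul, hAea, hAeb, add_dotProduct,
      smul_dotProduct, dotProduct_add, dotProduct_smul, smul_eq_mul,
      heaa, hebb, heab, heba]
    ring
  have hdot : ∀ x y : ℝ, cvec ⬝ᵥ (x • ea + y • eb)
      = x * (cvec ⬝ᵥ ea) + y * (cvec ⬝ᵥ eb) := by
    intro x y
    rw [dotProduct_add, dotProduct_smul, dotProduct_smul]
    simp only [smul_eq_mul]
  set α := cvec ⬝ᵥ ea with hα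
  set β := cvec ⬝ᵥ eb with hβ
  have h1 := hc (β • ea + (-α) • eb) (by rw [hdot]; ring)
  rw [hform] at h1
  have hsq : α ^ 2 ≤ 0 := by nlinarith [sq_nonneg β, sq_nonneg α]
  have hαz : α = 0 := (pow_eq_zero_iff two_ne_zero).1 (le_antisymm hsq (sq_nonneg α))
  have h2 := hc ((1:ℝ) • ea + (0:ℝ) • eb) (by rw [hdot, hαz]; ring)
  rw [hform] at h2
  nlinarith

lemma atMostOne_of_zero {A : Matrix (Fin n) (Fin n) ℝ} (hA : A.IsHermitian) (hz : A = 0) :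
    (Finset.univ.filter fun i => 0 < hA.eigenvalues i).card ≤ 1 := by
  apply atMostOne_of hA 0
  intro w _
  rw [hz, Matrix.zero_mulVec, dotProduct_zero]

lemma hessian_isHermitian (p : MvPolynomial (Fin n) ℝ) (z : Fin n → ℝ) :
    (Matrix.of fun i j => eval z (pderiv i (pderiv j p)) : Matrix (Fin n) (Fin n) ℝ).IsHermitian := by
  rw [Matrix.IsHermitian]
  ext i j
  rw [Matrix.conjTranspose_apply, Matrix.of_apply, Matrix.of_apply, star_trivial,
    pderiv_pderiv_comm]

lemma hessian_dot (p : MvPolynomial (Fin n) ℝ) (z u v : Fin n → ℝ) :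
    u ⬝ᵥ ((Matrix.of fun i j => eval z (pderiv i (pderiv j p)) : Matrix (Fin n) (Fin n) ℝ) *ᵥ v)
      = ∑ i, ∑ j, u i * v j * eval z (pderiv i (pderiv j p)) := by
  rw [dotProduct]
  refine Finset.sum_congr rfl fun i _ => ?_
  rw [Matrix.mulVec, dotProduct, Finset.mul_sum]
  refine Finset.sum_congr rfl fun j _ => ?_
  rw [Matrix.of_apply]
  ring

lemma starCond_of_eigen {p : MvPolynomial (Fin n) ℝ} {d : ℕ} (hhom : p.IsHomogeneous d)
    (hnn : ∀ m, 0 ≤ coeff m p)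
    (heig : ∀ z : Fin n → ℝ, (∀ i, 0 < z i) →
      ∀ hH : (Matrix.of fun i j =>
          eval z (pderiv i (pderiv j p)) : Matrix (Fin n) (Fin n) ℝ).IsHermitian,
        (Finset.univ.filter fun i => 0 < hH.eigenvalues i).card ≤ 1) :
    StarCond p := by
  intro z hz v
  rcases eq_or_ne p 0 with rfl | hp
  · simp
  rcases le_or_gt d 1 with hd | hd
  · have hzero : ∀ i j : Fin n, eval z (pderiv i (pderiv j p)) = 0 := fun i j => by
      rw [second_pderiv_eq_zero hhom hd i j, map_zero]
    have hS : (∑ i, ∑ j, v i * v j * eval z (pderiv i (pderiv j p))) = 0 :=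
      Finset.sum_eq_zero fun i _ => Finset.sum_eq_zero fun j _ => by rw [hzero i j, mul_zero]
    rw [hS, mul_zero]
    positivity
  · have hd1 : 1 ≤ d := by omega
    have hd2 : (2:ℝ) ≤ (d:ℝ) := by exact_mod_cast hd
    have ha : 0 < eval z p := eval_pos hnn hp hz
    have hH := hessian_isHermitian p z
    have hcard := heig z hz hH
    have hAu : ∀ u : Fin n → ℝ,
        z ⬝ᵥ ((Matrix.of fun i j =>
            eval z (pderiv i (pderiv j p)) : Matrix (Fin n) (Fin n) ℝ) *ᵥ u)
          = ((d:ℝ) - 1) * ∑ j, u j * eval z (pderiv j p) := by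
      intro u
      rw [hessian_dot]
      calc ∑ i, ∑ j, z i * u j * eval z (pderiv i (pderiv j p))
          = ∑ j, ∑ i, z i * u j * eval z (pderiv i (pderiv j p)) := Finset.sum_comm
        _ = ∑ j, u j * ∑ i, z i * eval z (pderiv i (pderiv j p)) := by
            refine Finset.sum_congr rfl fun j _ => ?_
            rw [Finset.mul_sum]
            exact Finset.sum_congr rfl fun i _ => by ring
        _ = ∑ j, u j * (((d:ℝ) - 1) * eval z (pderiv j p)) := by
            refine Finset.sum_congr rfl fun j _ => ?_
            rw [euler2 hhom hd1 z j]
        _ = ((d:ℝ) - 1) * ∑ j, u j * eval z (pderiv j p) := by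
            rw [Finset.mul_sum]
            exact Finset.sum_congr rfl fun j _ => by ring
    have hzz : z ⬝ᵥ ((Matrix.of fun i j =>
        eval z (pderiv i (pderiv j p)) : Matrix (Fin n) (Fin n) ℝ) *ᵥ z)
        = ((d:ℝ) - 1) * ((d:ℝ) * eval z p) := by
      rw [hAu z, euler hhom z]
    have hzpos : 0 < z ⬝ᵥ ((Matrix.of fun i j =>
        eval z (pderiv i (pderiv j p)) : Matrix (Fin n) (Fin n) ℝ) *ᵥ z) := by
      rw [hzz]
      exact mul_pos (by linarith) (mul_pos (by linarith) ha)
    have hrcs := rcs hH hcard z v hzpos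
    rw [hzz, hAu v, hessian_dot] at hrcs
    set S := ∑ i, ∑ j, v i * v j * eval z (pderiv i (pderiv j p)) with hSdef
    set b := ∑ j, v j * eval z (pderiv j p) with hbdef
    set a := eval z p with hadef
    have hpos : (0:ℝ) < ((d:ℝ) - 1) * (d:ℝ) := by nlinarith
    have h1 : (((d:ℝ) - 1) * (d:ℝ)) * (a * S) ≤ (((d:ℝ) - 1) * (d:ℝ)) * b ^ 2 := by
      nlinarith [hrcs, mul_nonneg (show (0:ℝ) ≤ (d:ℝ) - 1 by linarith) (sq_nonneg b)]
    exact le_of_mul_le_mul_left h1 hpos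

lemma eigen_of_starCond {p : MvPolynomial (Fin n) ℝ} (hnn : ∀ m, 0 ≤ coeff m p)
    (hstar : StarCond p) :
    ∀ z : Fin n → ℝ, (∀ i, 0 < z i) →
      ∀ hH : (Matrix.of fun i j =>
          eval z (pderiv i (pderiv j p)) : Matrix (Fin n) (Fin n) ℝ).IsHermitian,
        (Finset.univ.filter fun i => 0 < hH.eigenvalues i).card ≤ 1 := by
  intro z hz hH
  rcases eq_or_ne p 0 with rfl | hp
  · refine atMostOne_of_zero hH ?_
    ext i j
    simp
  · have ha : 0 < eval z p := eval_pos hnn hp hz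
    apply atMostOne_of hH (fun i => eval z (pderiv i p))
    intro u hu
    rw [dotProduct] at hu
    have hb : ∑ i, u i * eval z (pderiv i p) = 0 := by
      rw [← hu]
      exact Finset.sum_congr rfl fun i _ => by ring
    have hst := hstar z hz u
    rw [hb] at hst
    rw [hessian_dot]
    nlinarith [hst, ha]

end Stmt18

theorem stmt18 (n d : ℕ) (p : MvPolynomial (Fin n) ℝ)
    (hhom : p.IsHomogeneous d) (hnn : ∀ m, 0 ≤ coeff m p) :
    -- log-concavity of `p` on the positive orthant ...
    (∀ x y : Fin n → ℝ, (∀ i, 0 < x i) → (∀ i, 0 < y i) → ∀ t : ℝ, 0 ≤ t → t ≤ 1 →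
        (eval x p) ^ t * (eval y p) ^ (1 - t) ≤
          eval (fun i => t * x i + (1 - t) * y i) p)
    ↔
    -- ... iff the Hessian has at most one positive eigenvalue at every positive point
    (∀ x : Fin n → ℝ, (∀ i, 0 < x i) →
      ∀ hH : (Matrix.of fun i j =>
          eval x (pderiv i (pderiv j p)) : Matrix (Fin n) (Fin n) ℝ).IsHermitian,
        (Finset.univ.filter fun i => 0 < hH.eigenvalues i).card ≤ 1) := by
  constructor
  · intro hlc
    exact Stmt18.eigen_of_starCond hnn (Stmt18.starCond_of_logconcave hnn hlc)
  · intro heig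
    exact Stmt18.logconcave_of_starCond hnn (Stmt18.starCond_of_eigen hhom hnn heig)
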